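/- Let Ψ : [0,∞) → [0,∞) with Ψ(q) > 0 for q > 0, and let W : [0,∞) → [0,∞) be a continuous increasing function satisfying ∫_0^∞ e^{−qy} W(y) dy = 1/Ψ(q) for all q > 0. If R(x) = e^{θx} for some θ > 0, and W_n is defined by W_0 = 1, W_{n+1}(x) = ∫_x^∞ W(z−x) W_n(z)/R(z) dz, then W_n(x) = e^{−nθx} / ∏_{j=1}^n Ψ(jθ) for all n ≥ 1 and x ≥ 0. -/

import Mathlib

open MeasureTheory Set Filter

lemma shift_aux (f : ℝ → ℝ) (x : ℝ) : ∫ z in Ioi x, f (z - x) = ∫ y in Ioi (0:ℝ), f y := by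
  rw [← integral_indicator measurableSet_Ioi, ← integral_indicator measurableSet_Ioi,
    ← integral_sub_right_eq_self (μ := volume) (fun z => (Ioi (0:ℝ)).indicator f z) x]
  congr 1; ext z
  by_cases h : x < z
  · rw [indicator_of_mem (by simpa using h), indicator_of_mem (by simp [h])]
  · rw [indicator_of_notMem (by simpa using h), indicator_of_notMem (by simp [h])]

lemma key_aux (q : ℝ) (hq : 0 < q) (Ψ W : ℝ → ℝ)
    (hLT : ∫ y in Ioi (0 : ℝ), Real.exp (-q * y) * W y = 1 / Ψ q) (x : ℝ) :
    ∫ z in Ioi x, W (z - x) * Real.exp (-q * z)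
      = Real.exp (-q * x) * (1 / Ψ q) := by
  have h1 : ∀ z : ℝ, W (z - x) * Real.exp (-q * z)
      = (fun y => Real.exp (-q * x) * (Real.exp (-q * y) * W y)) (z - x) := by
    intro z
    simp only
    rw [show -q * z = -q * x + -q * (z - x) by ring, Real.exp_add]
    ring
  calc ∫ z in Ioi x, W (z - x) * Real.exp (-q * z)
      = ∫ z in Ioi x, (fun y => Real.exp (-q * x) * (Real.exp (-q * y) * W y)) (z - x) := by
        simp_rw [h1]
    _ = ∫ y in Ioi (0:ℝ), Real.exp (-q * x) * (Real.exp (-q * y) * W y) :=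
        shift_aux (fun y => Real.exp (-q * x) * (Real.exp (-q * y) * W y)) x
    _ = Real.exp (-q * x) * ∫ y in Ioi (0:ℝ), Real.exp (-q * y) * W y :=
        integral_const_mul _ _
    _ = Real.exp (-q * x) * (1 / Ψ q) := by rw [hLT]

theorem stmt2 (θ : ℝ) (hθ : 0 < θ) (Ψ W : ℝ → ℝ) (Wseq : ℕ → ℝ → ℝ)
    (hΨpos : ∀ q, 0 < q → 0 < Ψ q)
    (hWcont : Continuous W) (hWmono : StrictMonoOn W (Ici 0))
    (hWneg : ∀ x, x < 0 → W x = 0) (hW0 : ∀ x, 0 ≤ W x)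
    (hLT : ∀ q, 0 < q → ∫ y in Ioi (0 : ℝ), Real.exp (-q * y) * W y = 1 / Ψ q)
    (h0 : ∀ x, Wseq 0 x = 1)
    (hrec : ∀ n x, 0 ≤ x →
      Wseq (n + 1) x = ∫ z in Ioi x, W (z - x) * Wseq n z * Real.exp (-θ * z)) :
    ∀ n : ℕ, 1 ≤ n → ∀ x : ℝ, 0 ≤ x →
      Wseq n x = Real.exp (-(n : ℝ) * θ * x) / ∏ j ∈ Finset.Icc 1 n, Ψ ((j : ℝ) * θ) := by
  intro n
  induction n with
  | zero => omega
  | succ n ih =>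
    intro _ x hx
    have hΨn : ∀ m : ℕ, 1 ≤ m → (0:ℝ) < ∏ j ∈ Finset.Icc 1 m, Ψ ((j : ℝ) * θ) := by
      intro m _
      exact Finset.prod_pos fun j hj => hΨpos _ (by
        have : 1 ≤ j := (Finset.mem_Icc.mp hj).1
        positivity)
    rcases Nat.eq_zero_or_pos n with hn | hn
    · subst hn
      rw [hrec 0 x hx]
      have : ∀ z : ℝ, W (z - x) * Wseq 0 z * Real.exp (-θ * z)
          = W (z - x) * Real.exp (-θ * z) := by
        intro z; rw [h0]; ring
      simp_rw [this]
      rw [key_aux θ hθ Ψ W (hLT θ hθ) x]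
      norm_num [div_eq_mul_inv]
    · have hq : (0:ℝ) < ((n:ℝ) + 1) * θ := by positivity
      rw [hrec n x hx]
      have hcong : ∫ z in Ioi x, W (z - x) * Wseq n z * Real.exp (-θ * z)
          = ∫ z in Ioi x, (1 / ∏ j ∈ Finset.Icc 1 n, Ψ ((j : ℝ) * θ)) *
              (W (z - x) * Real.exp (-(((n:ℝ) + 1) * θ) * z)) := by
        apply setIntegral_congr_fun measurableSet_Ioi
        intro z hz
        have hz0 : (0:ℝ) ≤ z := le_of_lt (lt_of_le_of_lt hx hz)
        dsimp only
        rw [ih hn z hz0]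
        rw [div_eq_mul_inv, ← one_div]
        have : Real.exp (-(((n:ℝ) + 1) * θ) * z)
            = Real.exp (-(n:ℝ) * θ * z) * Real.exp (-θ * z) := by
          rw [← Real.exp_add]; ring_nf
        rw [this]; ring
      rw [hcong, integral_const_mul, key_aux _ hq Ψ W (hLT _ hq) x]
      have hsucc : ∏ j ∈ Finset.Icc 1 (n + 1), Ψ ((j : ℝ) * θ)
          = (∏ j ∈ Finset.Icc 1 n, Ψ ((j : ℝ) * θ)) * Ψ (((n:ℝ) + 1) * θ) := by
        rw [Finset.prod_Icc_succ_top (by omega)]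
        rw [Nat.cast_add, Nat.cast_one]
      rw [hsucc]
      have h1 : (∏ j ∈ Finset.Icc 1 n, Ψ ((j : ℝ) * θ)) ≠ 0 := ne_of_gt (hΨn n hn)
      have h2 : Ψ (((n:ℝ) + 1) * θ) ≠ 0 := ne_of_gt (hΨpos _ hq)
      have hexp : Real.exp (-(((n+1:ℕ)):ℝ) * θ * x) = Real.exp (-(((n:ℝ)+1) * θ) * x) := by
        congr 1; push_cast; ring
      rw [hexp]
      field_simp
      simp_rw [mul_comm θ]
      rw [div_mul_eq_div_div_swap, div_self h1]
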